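/- arXiv:0810.2188 — 3 statements merged into one kernel-verified Lean document; each statement's English description precedes it below -/
import Mathlib

section
/- The quadratic polynomials h(x + iy) = x² − y² and h(x + iy) = 2xy, as well as any affine function, have discrete Laplacian zero at every vertex of an isoradial graph; and for φ(x+iy) = ax² + bxy + cy², the discrete Laplacian equals the continuous one: [Δ^δ φ](u) = 2(a + c) at every vertex u. -/
/-- approximation property, Lemma 2.2(i): On an isoradial graph of
mesh `δ` (a vertex `u` with neighbors `us s`, dual cycle `ws s`, rhombi half-angles
`θ s`), every affine function and the quadratics `x² − y²`, `2xy` have vanishing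
discrete Laplacian at `u`, and for `φ(x+iy) = ax² + bxy + cy²` the discrete
Laplacian equals the continuous one, `[Δ^δ φ](u) = 2(a + c)`, where
`[Δ^δ φ](u) = μ⁻¹ ∑ tan θ_s (φ(u_s) − φ(u))` and `μ = (δ²/2) ∑ sin 2θ_s`. -/
theorem discrete_laplacian_on_quadratics (n : ℕ) [NeZero n] (δ : ℝ) (hδ : 0 < δ)
    (θ : ZMod n → ℝ) (hθ : ∀ s, θ s ∈ Set.Ioo 0 (Real.pi / 2))
    (u : ℂ) (us ws : ZMod n → ℂ)
    (hlin : ∀ s, (Real.tan (θ s) : ℂ) * (us s - u) = -Complex.I * (ws (s + 1) - ws s))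
    (hquad : ∀ s, (Real.tan (θ s) : ℂ) * ((us s) ^ 2 - u ^ 2)
        = -Complex.I * ((ws (s + 1)) ^ 2 - (ws s) ^ 2))
    (hlen : ∀ s, ‖us s - u‖ = 2 * δ * Real.cos (θ s))
    (μ : ℝ) (hμ : μ = δ ^ 2 / 2 * ∑ s : ZMod n, Real.sin (2 * θ s))
    (Δd : (ℂ → ℝ) → ℝ)
    (hΔd : ∀ φ : ℂ → ℝ,
      Δd φ = μ⁻¹ * ∑ s : ZMod n, Real.tan (θ s) * (φ (us s) - φ u)) :
    (∀ α β γ : ℝ, Δd (fun z => α * z.re + β * z.im + γ) = 0) ∧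
    Δd (fun z => z.re ^ 2 - z.im ^ 2) = 0 ∧
    Δd (fun z => 2 * z.re * z.im) = 0 ∧
    (∀ a b c : ℝ,
      Δd (fun z => a * z.re ^ 2 + b * (z.re * z.im) + c * z.im ^ 2) = 2 * (a + c)) := by
  have hcos : ∀ s, 0 < Real.cos (θ s) := fun s =>
    Real.cos_pos_of_mem_Ioo ⟨by linarith [(hθ s).1, Real.pi_pos], (hθ s).2⟩
  have hsin2 : ∀ s, 0 < Real.sin (2 * θ s) := fun s =>
    Real.sin_pos_of_pos_of_lt_pi (by linarith [(hθ s).1]) (by linarith [(hθ s).2])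
  have hμpos : 0 < μ := by
    rw [hμ]
    apply mul_pos (by positivity)
    apply Finset.sum_pos (fun s _ => hsin2 s)
    exact Finset.univ_nonempty (α := ZMod n)
  have htel : ∀ f : ZMod n → ℂ, ∑ s : ZMod n, (f (s + 1) - f s) = 0 := by
    intro f
    rw [Finset.sum_sub_distrib, sub_eq_zero]
    exact Fintype.sum_equiv (Equiv.addRight 1) _ _ (fun s => rfl)
  have S1 : ∑ s : ZMod n, (Real.tan (θ s) : ℂ) * (us s - u) = 0 := by
    calc ∑ s : ZMod n, (Real.tan (θ s) : ℂ) * (us s - u)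
        = ∑ s : ZMod n, -Complex.I * (ws (s + 1) - ws s) :=
          Finset.sum_congr rfl fun s _ => hlin s
      _ = -Complex.I * ∑ s : ZMod n, (ws (s + 1) - ws s) := by rw [Finset.mul_sum]
      _ = 0 := by rw [htel, mul_zero]
  have S2 : ∑ s : ZMod n, (Real.tan (θ s) : ℂ) * ((us s) ^ 2 - u ^ 2) = 0 := by
    calc ∑ s : ZMod n, (Real.tan (θ s) : ℂ) * ((us s) ^ 2 - u ^ 2)
        = ∑ s : ZMod n, -Complex.I * ((ws (s + 1)) ^ 2 - (ws s) ^ 2) :=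
          Finset.sum_congr rfl fun s _ => hquad s
      _ = -Complex.I * ∑ s : ZMod n, ((ws (s + 1)) ^ 2 - (ws s) ^ 2) := by
          rw [Finset.mul_sum]
      _ = 0 := by
          rw [show (∑ s : ZMod n, ((ws (s + 1)) ^ 2 - (ws s) ^ 2)) = 0 from
            htel (fun s => ws s ^ 2), mul_zero]
  have hA : ∑ s : ZMod n, Real.tan (θ s) * ((us s).re - u.re) = 0 := by
    have h := congrArg Complex.re S1
    simpa [Complex.mul_re, Complex.sub_re, Complex.sub_im, Complex.tan_ofReal_re] using h
  have hB : ∑ s : ZMod n, Real.tan (θ s) * ((us s).im - u.im) = 0 := by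
    have h := congrArg Complex.im S1
    simpa [Complex.mul_im, Complex.sub_re, Complex.sub_im, Complex.tan_ofReal_re] using h
  have hC : ∑ s : ZMod n,
      Real.tan (θ s) * (((us s).re ^ 2 - (us s).im ^ 2) - (u.re ^ 2 - u.im ^ 2)) = 0 := by
    have h := congrArg Complex.re S2
    simp only [Complex.re_sum, Complex.mul_re, Complex.ofReal_re, Complex.ofReal_im,
      Complex.sub_re, Complex.sub_im, Complex.zero_re, zero_mul, sub_zero, pow_two,
      Complex.mul_im] at h
    rw [← h]
    exact Finset.sum_congr rfl fun s _ => by ring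
  have hD : ∑ s : ZMod n,
      Real.tan (θ s) * (2 * (us s).re * (us s).im - 2 * u.re * u.im) = 0 := by
    have h := congrArg Complex.im S2
    simp only [Complex.im_sum, Complex.mul_re, Complex.ofReal_re, Complex.ofReal_im,
      Complex.sub_re, Complex.sub_im, Complex.zero_im, zero_mul, sub_zero, pow_two,
      Complex.mul_im] at h
    rw [← h]
    exact Finset.sum_congr rfl fun s _ => by ring
  have hE : ∑ s : ZMod n,
      Real.tan (θ s) * (((us s).re - u.re) ^ 2 + ((us s).im - u.im) ^ 2) = 4 * μ := by
    have hterm : ∀ s : ZMod n,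
        Real.tan (θ s) * (((us s).re - u.re) ^ 2 + ((us s).im - u.im) ^ 2)
          = 2 * δ ^ 2 * Real.sin (2 * θ s) := by
      intro s
      have h1 : ((us s).re - u.re) ^ 2 + ((us s).im - u.im) ^ 2
          = (2 * δ * Real.cos (θ s)) ^ 2 := by
        have h2 := congrArg (· ^ 2) (hlen s)
        simp only [Complex.sq_norm, Complex.normSq_apply, Complex.sub_re, Complex.sub_im] at h2
        rw [← h2]; ring
      rw [h1, Real.tan_eq_sin_div_cos, Real.sin_two_mul]
      field_simp [(hcos s).ne']
    rw [Finset.sum_congr rfl fun s _ => hterm s, ← Finset.mul_sum, hμ]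
    ring
  have hEfull : ∑ s : ZMod n,
      Real.tan (θ s) * (((us s).re ^ 2 + (us s).im ^ 2) - (u.re ^ 2 + u.im ^ 2)) = 4 * μ := by
    have : ∀ s : ZMod n,
        Real.tan (θ s) * (((us s).re ^ 2 + (us s).im ^ 2) - (u.re ^ 2 + u.im ^ 2))
          = Real.tan (θ s) * (((us s).re - u.re) ^ 2 + ((us s).im - u.im) ^ 2)
            + 2 * u.re * (Real.tan (θ s) * ((us s).re - u.re))
            + 2 * u.im * (Real.tan (θ s) * ((us s).im - u.im)) := fun s => by ring
    rw [Finset.sum_congr rfl fun s _ => this s]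
    rw [Finset.sum_add_distrib, Finset.sum_add_distrib, ← Finset.mul_sum, ← Finset.mul_sum,
      hA, hB, hE]
    ring
  refine ⟨?_, ?_, ?_, ?_⟩
  · intro α β γ
    rw [hΔd]
    have : ∑ s : ZMod n, Real.tan (θ s) *
        ((α * (us s).re + β * (us s).im + γ) - (α * u.re + β * u.im + γ))
        = α * (∑ s : ZMod n, Real.tan (θ s) * ((us s).re - u.re))
          + β * (∑ s : ZMod n, Real.tan (θ s) * ((us s).im - u.im)) := by
      rw [Finset.mul_sum, Finset.mul_sum, ← Finset.sum_add_distrib]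
      exact Finset.sum_congr rfl fun s _ => by ring
    rw [this, hA, hB]; ring
  · rw [hΔd]; rw [hC, mul_zero]
  · rw [hΔd]
    have : ∑ s : ZMod n, Real.tan (θ s) *
        (2 * (us s).re * (us s).im - 2 * u.re * u.im) = 0 := hD
    rw [this, mul_zero]
  · intro a b c
    rw [hΔd]
    have key : ∑ s : ZMod n, Real.tan (θ s) *
        ((a * (us s).re ^ 2 + b * ((us s).re * (us s).im) + c * (us s).im ^ 2)
          - (a * u.re ^ 2 + b * (u.re * u.im) + c * u.im ^ 2))
        = (a + c) / 2 * (∑ s : ZMod n,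
            Real.tan (θ s) * (((us s).re ^ 2 + (us s).im ^ 2) - (u.re ^ 2 + u.im ^ 2)))
          + (a - c) / 2 * (∑ s : ZMod n,
            Real.tan (θ s) * (((us s).re ^ 2 - (us s).im ^ 2) - (u.re ^ 2 - u.im ^ 2)))
          + b / 2 * (∑ s : ZMod n,
            Real.tan (θ s) * (2 * (us s).re * (us s).im - 2 * u.re * u.im)) := by
      rw [Finset.mul_sum, Finset.mul_sum, Finset.mul_sum, ← Finset.sum_add_distrib,
        ← Finset.sum_add_distrib]
      exact Finset.sum_congr rfl fun s _ => by ring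
    rw [key, hEfull, hC, hD]
    field_simp
    ring
end

section
/- Let φ ∈ C³ be defined on the disc B(u, 2δ) ⊂ ℂ for a vertex u of an isoradial graph of mesh δ. Then |[Δ^δ (φ|_Γ)](u) − [Δφ](u)| ≤ C · δ · max_{B(u,2δ)} |D³φ|, where C is an absolute constant depending only on the lower bound η for the rhombi angles. -/
open Metric

private lemma hasFTaylor_comp_const_add {n : WithTop ℕ∞} {f : ℂ → ℝ}
    {p : ℂ → FormalMultilinearSeries ℝ ℂ ℝ} {s : Set ℂ}
    (hf : HasFTaylorSeriesUpToOn n f p s) (u : ℂ) :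
    HasFTaylorSeriesUpToOn n (fun z => f (u + z)) (fun z => p (u + z))
      ((fun z => u + z) ⁻¹' s) where
  zero_eq x hx := hf.zero_eq (u + x) hx
  fderivWithin m hm x hx := by
    have H := hf.fderivWithin m hm (u + x) hx
    have hA : HasFDerivWithinAt (fun z : ℂ => u + z) (ContinuousLinearMap.id ℝ ℂ)
        ((fun z => u + z) ⁻¹' s) x := (hasFDerivWithinAt_id x _).const_add u
    have := H.comp x hA (Set.mapsTo_preimage _ _)
    rw [ContinuousLinearMap.comp_id] at this
    exact this
  cont m hm := (hf.cont m hm).comp ((continuous_const.add continuous_id).continuousOn)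
      (Set.mapsTo_preimage _ _)

private lemma taylor_three_bound {φ : ℂ → ℝ} {u : ℂ} {r M : ℝ} (hr : 0 < r)
    (hφ : ContDiffOn ℝ 3 φ (closedBall u r))
    (hM : ∀ z ∈ closedBall u r, ‖iteratedFDerivWithin ℝ 3 φ (closedBall u r) z‖ ≤ M)
    (h : ℂ) (hh : ‖h‖ ≤ r) :
    |φ (u + h) - φ u - iteratedFDerivWithin ℝ 1 φ (closedBall u r) u (fun _ => h)
      - iteratedFDerivWithin ℝ 2 φ (closedBall u r) u (fun _ => h) / 2|
      ≤ M * r ^ 3 / 2 := by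
  set S := closedBall u r with hSdef
  have hS : UniqueDiffOn ℝ S := by
    apply uniqueDiffOn_convex (convex_closedBall u r)
    rw [interior_closedBall u hr.ne']
    exact nonempty_ball.2 hr
  have hM0 : 0 ≤ M :=
    le_trans (norm_nonneg _) (hM u (mem_closedBall_self hr.le))
  have hp : HasFTaylorSeriesUpToOn 3 φ (ftaylorSeriesWithin ℝ φ S) S :=
    hφ.ftaylorSeriesWithin hS
  have hpu := hasFTaylor_comp_const_add hp u
  set Lh := ContinuousLinearMap.toSpanSingleton ℝ h with hLh
  have hcomp := hpu.compContinuousLinearMap Lh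
  have hsub : Set.Icc (0:ℝ) 1 ⊆ Lh ⁻¹' ((fun z => u + z) ⁻¹' S) := by
    intro t ht
    simp only [Set.mem_preimage, hSdef, mem_closedBall]
    have hLt : Lh t = t • h := rfl
    rw [hLt, dist_eq_norm, add_sub_cancel_left, norm_smul, Real.norm_eq_abs,
      abs_of_nonneg ht.1]
    calc t * ‖h‖ ≤ 1 * r := by
          apply mul_le_mul ht.2 hh (norm_nonneg _) zero_le_one
      _ = r := one_mul r
  have hq := hcomp.mono hsub
  set g : ℝ → ℝ := fun t => φ (u + t • h) with hgdef
  have hgeq : ((fun z => φ (u + z)) ∘ Lh) = g := rfl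
  rw [hgeq] at hq
  have key : ∀ k : ℕ, k ≤ 3 → ∀ t ∈ Set.Icc (0:ℝ) 1,
      iteratedDerivWithin k g (Set.Icc 0 1) t
        = iteratedFDerivWithin ℝ k φ S (u + t • h) (fun _ => h) := by
    intro k hk t ht
    have e := hq.eq_iteratedFDerivWithin_of_uniqueDiffOn (by exact_mod_cast hk)
      (uniqueDiffOn_Icc one_pos) ht
    rw [iteratedDerivWithin_eq_iteratedFDerivWithin, ← e,
      ContinuousMultilinearMap.compContinuousLinearMap_apply]
    simp [Lh, ContinuousLinearMap.toSpanSingleton_apply, ftaylorSeriesWithin]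
  have hg3 : ContDiffOn ℝ 3 g (Set.Icc 0 1) := by
    have haff : ContDiff ℝ 3 (fun t : ℝ => u + t • h) :=
      contDiff_const.add (contDiff_id.smul contDiff_const)
    exact hφ.comp haff.contDiffOn (fun t ht => hsub ht)
  have hC : ∀ y ∈ Set.Icc (0:ℝ) 1,
      ‖iteratedDerivWithin 3 g (Set.Icc 0 1) y‖ ≤ M * r ^ 3 := by
    intro y hy
    rw [key 3 le_rfl y hy]
    calc ‖iteratedFDerivWithin ℝ 3 φ S (u + y • h) (fun _ => h)‖
        ≤ ‖iteratedFDerivWithin ℝ 3 φ S (u + y • h)‖ * ∏ _i : Fin 3, ‖h‖ :=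
          ContinuousMultilinearMap.le_opNorm _ _
      _ ≤ M * r ^ 3 := by
          rw [Finset.prod_const]
          simp only [Finset.card_univ, Fintype.card_fin]
          have hz : u + y • h ∈ S := hsub hy
          apply mul_le_mul (hM _ hz) (pow_le_pow_left₀ (norm_nonneg _) hh 3)
            (pow_nonneg (norm_nonneg _) 3) hM0
  have bound := taylor_mean_remainder_bound (zero_le_one) hg3
    (Set.right_mem_Icc.2 zero_le_one) hC
  rw [taylor_within_apply] at bound
  have e0 := key 0 (by norm_num) 0 (Set.left_mem_Icc.2 zero_le_one)
  have e1 := key 1 (by norm_num) 0 (Set.left_mem_Icc.2 zero_le_one)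
  have e2 := key 2 (by norm_num) 0 (Set.left_mem_Icc.2 zero_le_one)
  simp only [Finset.sum_range_succ, Finset.sum_range_zero, e0, e1, e2] at bound
  norm_num [Nat.factorial] at bound
  have hg1 : g 1 = φ (u + h) := by simp [hgdef]
  rw [hg1] at bound
  set f1 := (iteratedFDerivWithin ℝ 1 φ S u) fun _ => h with hf1
  set f2 := (iteratedFDerivWithin ℝ 2 φ S u) fun _ => h with hf2
  have harg : φ (u + h) - φ u - f1 - f2 / 2
      = φ (u + h) - (φ u + f1 + 1 / 2 * f2) := by ring
  rw [harg]
  exact bound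

private lemma update_fin1 (m : Fin 1 → ℂ) (z : ℂ) : Function.update m 0 z = fun _ => z := by
  funext i
  rw [Subsingleton.elim i 0]
  simp

private noncomputable def linOfMulti (f : ContinuousMultilinearMap ℝ (fun _ : Fin 1 => ℂ) ℝ) : ℂ →ₗ[ℝ] ℝ where
  toFun z := f fun _ => z
  map_add' a b := by
    show f (fun _ => a + b) = f (fun _ => a) + f (fun _ => b)
    rw [← update_fin1 (fun _ => a) (a + b), f.map_update_add, update_fin1, update_fin1]
  map_smul' c a := by
    show f (fun _ => c • a) = c • f (fun _ => a)
    rw [← update_fin1 (fun _ => a) (c • a), f.map_update_smul, update_fin1]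

private lemma linOfMulti_apply (f : ContinuousMultilinearMap ℝ (fun _ : Fin 1 => ℂ) ℝ) (z : ℂ) :
    linOfMulti f z = f fun _ => z := rfl

private lemma upd2_0 (a b z : ℂ) : Function.update ![a, b] 0 z = ![z, b] := by
  funext i
  fin_cases i <;> simp [Function.update]

private lemma upd2_1 (a b z : ℂ) : Function.update ![a, b] 1 z = ![a, z] := by
  funext i
  fin_cases i <;> simp [Function.update]

private lemma bilin_left (f : ContinuousMultilinearMap ℝ (fun _ : Fin 2 => ℂ) ℝ)
    (x y : ℝ) (b : ℂ) :
    f ![x • 1 + y • Complex.I, b] = x * f ![1, b] + y * f ![Complex.I, b] := by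
  rw [← upd2_0 1 b (x • 1 + y • Complex.I), f.map_update_add,
    f.map_update_smul, f.map_update_smul, upd2_0, upd2_0]
  simp [smul_eq_mul]

private lemma bilin_right (f : ContinuousMultilinearMap ℝ (fun _ : Fin 2 => ℂ) ℝ)
    (x y : ℝ) (a : ℂ) :
    f ![a, x • 1 + y • Complex.I] = x * f ![a, 1] + y * f ![a, Complex.I] := by
  rw [← upd2_1 a 1 (x • 1 + y • Complex.I), f.map_update_add,
    f.map_update_smul, f.map_update_smul, upd2_1, upd2_1]
  simp [smul_eq_mul]

private lemma bilin_expand (f : ContinuousMultilinearMap ℝ (fun _ : Fin 2 => ℂ) ℝ) (x y : ℝ) :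
    f ![x • 1 + y • Complex.I, x • 1 + y • Complex.I]
      = x * x * f ![1, 1] + x * y * f ![1, Complex.I]
        + y * x * f ![Complex.I, 1] + y * y * f ![Complex.I, Complex.I] := by
  rw [bilin_left, bilin_right, bilin_right]
  ring

private lemma sin_two_ge {η t : ℝ} (hη : 0 < η) (h1 : η ≤ t) (h2 : t ≤ Real.pi / 2 - η) :
    Real.sin (2 * η) ≤ Real.sin (2 * t) := by
  have hπ := Real.pi_pos
  rcases le_or_gt (2 * t) (Real.pi / 2) with hc | hc
  · rcases eq_or_lt_of_le h1 with rfl | hlt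
    · exact le_rfl
    · exact (Real.sin_lt_sin_of_lt_of_le_pi_div_two (by linarith) hc (by linarith)).le
  · rw [← Real.sin_pi_sub (2 * t)]
    rcases eq_or_lt_of_le (show 2 * η ≤ Real.pi - 2 * t by linarith) with he | hlt
    · rw [he]
    · exact (Real.sin_lt_sin_of_lt_of_le_pi_div_two (by linarith) (by linarith) hlt).le

/-- approximation property, Lemma 2.2(ii): Let `φ ∈ C³` on the disc
`B(u, 2δ)` around a vertex `u` of an isoradial graph of mesh `δ` whose rhombi
half-angles lie in `[η, π/2 − η]`. Then
`|[Δ^δ (φ|_Γ)](u) − [Δφ](u)| ≤ C · δ · max_{B(u,2δ)} |D³φ|`,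
with `C` depending only on `η`. Here `[Δ^δ φ](u) = μ⁻¹ ∑ tan θ_s (φ(u_s) − φ(u))`,
`μ = (δ²/2) ∑ sin 2θ_s`, and `[Δφ](u) = D²φ(u)[1,1] + D²φ(u)[i,i]`. -/
theorem discrete_laplacian_approximation :
    ∀ η : ℝ, 0 < η → η < Real.pi / 4 →
    ∃ C : ℝ, 0 < C ∧
      ∀ (n : ℕ) [NeZero n] (δ : ℝ), 0 < δ →
      ∀ (θ : ZMod n → ℝ), (∀ s, θ s ∈ Set.Icc η (Real.pi / 2 - η)) →
      ∀ (u : ℂ) (us ws : ZMod n → ℂ),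
      (∀ s, (Real.tan (θ s) : ℂ) * (us s - u) = -Complex.I * (ws (s + 1) - ws s)) →
      (∀ s, (Real.tan (θ s) : ℂ) * ((us s) ^ 2 - u ^ 2)
          = -Complex.I * ((ws (s + 1)) ^ 2 - (ws s) ^ 2)) →
      (∀ s, ‖us s - u‖ = 2 * δ * Real.cos (θ s)) →
      (∑ s : ZMod n, (Real.pi - 2 * θ s)) = 2 * Real.pi →
      ∀ (φ : ℂ → ℝ) (M : ℝ),
      ContDiffOn ℝ 3 φ (closedBall u (2 * δ)) →
      (∀ z ∈ closedBall u (2 * δ),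
        ‖iteratedFDerivWithin ℝ 3 φ (closedBall u (2 * δ)) z‖ ≤ M) →
      |(δ ^ 2 / 2 * ∑ s : ZMod n, Real.sin (2 * θ s))⁻¹
          * (∑ s : ZMod n, Real.tan (θ s) * (φ (us s) - φ u))
        - (iteratedFDerivWithin ℝ 2 φ (closedBall u (2 * δ)) u ![1, 1]
            + iteratedFDerivWithin ℝ 2 φ (closedBall u (2 * δ)) u
                ![Complex.I, Complex.I])|
        ≤ C * δ * M := by
  intro η hη hη4
  have hπ : (0:ℝ) < Real.pi := Real.pi_pos
  have htanpos : 0 < Real.tan (Real.pi / 2 - η) :=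
    Real.tan_pos_of_pos_of_lt_pi_div_two (by linarith) (by linarith)
  have hsinpos : 0 < Real.sin (2 * η) :=
    Real.sin_pos_of_pos_of_lt_pi (by linarith) (by linarith)
  refine ⟨8 * Real.tan (Real.pi / 2 - η) / Real.sin (2 * η), by positivity, ?_⟩
  intro n _ δ hδ θ hθ u us ws h1 h2 habs _ φ M hφ hM
  have hnpos : 0 < (n : ℝ) := by
    exact_mod_cast Nat.pos_of_ne_zero (NeZero.ne n)
  set S := closedBall u (2 * δ) with hSdef
  set T : ZMod n → ℝ := fun s => Real.tan (θ s) with hTdef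
  have hθa : ∀ s, 0 < θ s := fun s => lt_of_lt_of_le hη (hθ s).1
  have hθb : ∀ s, θ s < Real.pi / 2 := fun s => lt_of_le_of_lt (hθ s).2 (by linarith)
  have hcos : ∀ s, 0 < Real.cos (θ s) := fun s =>
    Real.cos_pos_of_mem_Ioo ⟨by linarith [hθa s], hθb s⟩
  have htan0 : ∀ s, 0 < T s := fun s =>
    Real.tan_pos_of_pos_of_lt_pi_div_two (hθa s) (hθb s)
  have htanle : ∀ s, T s ≤ Real.tan (Real.pi / 2 - η) := fun s =>
    Real.strictMonoOn_tan.monotoneOn ⟨by linarith [hθa s], hθb s⟩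
      ⟨by linarith, by linarith⟩ (hθ s).2
  -- telescoping sums
  have tele : ∀ w : ZMod n → ℂ, ∑ s : ZMod n, (w (s + 1) - w s) = 0 := by
    intro w
    rw [Finset.sum_sub_distrib, sub_eq_zero]
    exact Fintype.sum_equiv (Equiv.addRight (1 : ZMod n)) _ _ (fun s => rfl)
  have A : ∑ s : ZMod n, (T s : ℂ) * (us s - u) = 0 := by
    rw [Finset.sum_congr rfl (fun s _ => h1 s), ← Finset.mul_sum,
      tele ws, mul_zero]
  have B : ∑ s : ZMod n, (T s : ℂ) * ((us s) ^ 2 - u ^ 2) = 0 := by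
    rw [Finset.sum_congr rfl (fun s _ => h2 s), ← Finset.mul_sum,
      tele (fun s => (ws s) ^ 2), mul_zero]
  have C : ∑ s : ZMod n, (T s : ℂ) * (us s - u) ^ 2 = 0 := by
    have expand : ∀ s : ZMod n, (T s : ℂ) * (us s - u) ^ 2
        = (T s : ℂ) * ((us s) ^ 2 - u ^ 2) - 2 * u * ((T s : ℂ) * (us s - u)) := by
      intro s; ring
    rw [Finset.sum_congr rfl (fun s _ => expand s), Finset.sum_sub_distrib, B,
      ← Finset.mul_sum, A, mul_zero, zero_sub, neg_zero]
  set x : ZMod n → ℝ := fun s => (us s - u).re with hxdef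
  set y : ZMod n → ℝ := fun s => (us s - u).im with hydef
  have A1 : ∑ s : ZMod n, T s * x s = 0 := by
    have h := congrArg Complex.re A
    rw [Complex.re_sum] at h
    simpa [Complex.mul_re, hxdef] using h
  have C1 : ∑ s : ZMod n, T s * (x s * x s - y s * y s) = 0 := by
    have h := congrArg Complex.re C
    rw [Complex.re_sum] at h
    rw [Finset.sum_congr rfl (fun s _ => ?_)] at h
    · exact h
    · simp only [pow_two, Complex.mul_re, Complex.mul_im, Complex.ofReal_re,
        Complex.ofReal_im]
      ring
  have C2 : ∑ s : ZMod n, T s * (x s * y s) = 0 := by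
    have h := congrArg Complex.im C
    rw [Complex.im_sum] at h
    rw [Finset.sum_congr rfl (fun s _ =>
      show ((T s : ℂ) * (us s - u) ^ 2).im = 2 * (T s * (x s * y s)) from ?_)] at h
    · rw [← Finset.mul_sum, Complex.zero_im] at h
      linarith
    · simp only [pow_two, Complex.mul_re, Complex.mul_im, Complex.ofReal_re,
        Complex.ofReal_im]
      ring
  have D : ∀ s, x s * x s + y s * y s = (2 * δ * Real.cos (θ s)) ^ 2 := by
    intro s
    have h := congrArg (fun r : ℝ => r ^ 2) (habs s)
    rw [Complex.sq_norm, Complex.normSq_apply] at h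
    exact h
  have E : ∀ s, T s * (x s * x s + y s * y s) = 2 * δ ^ 2 * Real.sin (2 * θ s) := by
    intro s
    rw [D s, Real.sin_two_mul, hTdef]
    simp only
    rw [Real.tan_eq_sin_div_cos]
    field_simp [(hcos s).ne']
  have K1 : ∑ s : ZMod n, T s * (y s * y s) = ∑ s : ZMod n, T s * (x s * x s) := by
    have : ∑ s : ZMod n, (T s * (x s * x s) - T s * (y s * y s)) = 0 := by
      rw [Finset.sum_congr rfl (fun s _ => by rw [← mul_sub] : ∀ s ∈ Finset.univ,
        T s * (x s * x s) - T s * (y s * y s) = T s * (x s * x s - y s * y s))]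
      exact C1
    rw [Finset.sum_sub_distrib] at this
    linarith
  have K2 : ∑ s : ZMod n, T s * (x s * x s) = δ ^ 2 * ∑ s : ZMod n, Real.sin (2 * θ s) := by
    have hsum2 : (∑ s : ZMod n, T s * (x s * x s)) + ∑ s : ZMod n, T s * (y s * y s)
        = 2 * δ ^ 2 * ∑ s : ZMod n, Real.sin (2 * θ s) := by
      rw [← Finset.sum_add_distrib, Finset.mul_sum]
      exact Finset.sum_congr rfl (fun s _ => by rw [← mul_add, E s])
    rw [K1] at hsum2
    linarith
  -- positivity of the normalization
  have hsinsum : (n : ℝ) * Real.sin (2 * η) ≤ ∑ s : ZMod n, Real.sin (2 * θ s) := by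
    calc (n : ℝ) * Real.sin (2 * η) = ∑ _s : ZMod n, Real.sin (2 * η) := by
          rw [Finset.sum_const, Finset.card_univ, ZMod.card, nsmul_eq_mul]
      _ ≤ _ := Finset.sum_le_sum (fun s _ => sin_two_ge hη (hθ s).1 (hθ s).2)
  have hμpos : 0 < δ ^ 2 / 2 * ∑ s : ZMod n, Real.sin (2 * θ s) := by
    have : 0 < (n : ℝ) * Real.sin (2 * η) := by positivity
    have h2 : 0 < δ ^ 2 / 2 := by positivity
    nlinarith
  -- Taylor expansion at each vertex
  have hr : 0 < 2 * δ := by linarith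
  have hM0 : 0 ≤ M :=
    le_trans (norm_nonneg _) (hM u (mem_closedBall_self (by linarith)))
  have hnormh : ∀ s, ‖us s - u‖ ≤ 2 * δ := by
    intro s
    rw [habs s]
    nlinarith [Real.cos_le_one (θ s), hcos s]
  set p1 := iteratedFDerivWithin ℝ 1 φ S u with hp1def
  set p2 := iteratedFDerivWithin ℝ 2 φ S u with hp2def
  set R : ZMod n → ℝ := fun s =>
    φ (us s) - φ u - p1 (fun _ => us s - u) - p2 (fun _ => us s - u) / 2 with hRdef
  have hRle : ∀ s, |R s| ≤ M * (2 * δ) ^ 3 / 2 := by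
    intro s
    have h := taylor_three_bound hr hφ hM (us s - u) (hnormh s)
    have e : u + (us s - u) = us s := by ring
    rw [e] at h
    exact h
  -- linear term vanishes
  have Lsum : ∑ s : ZMod n, T s * (p1 fun _ => us s - u) = 0 := by
    have step : ∀ s : ZMod n, T s * (p1 fun _ => us s - u)
        = linOfMulti p1 (T s • (us s - u)) := by
      intro s
      rw [map_smul, linOfMulti_apply, smul_eq_mul]
    rw [Finset.sum_congr rfl (fun s _ => step s), ← map_sum]
    have hz : ∑ s : ZMod n, T s • (us s - u) = 0 := by
      rw [Finset.sum_congr rfl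
        (fun s _ => (Complex.real_smul (x := T s) (z := us s - u)))]
      exact A
    rw [hz, map_zero]
  -- quadratic term
  have hvec : ∀ s, (fun _ : Fin 2 => us s - u)
      = ![x s • 1 + y s • Complex.I, x s • 1 + y s • Complex.I] := by
    intro s
    have hz : us s - u = x s • 1 + y s • Complex.I := by
      rw [Complex.real_smul, Complex.real_smul, mul_one]
      exact (Complex.re_add_im _).symm
    funext i; fin_cases i <;> simp [hz]
  have Qsum : ∑ s : ZMod n, T s * (p2 fun _ => us s - u)
      = (δ ^ 2 * ∑ s : ZMod n, Real.sin (2 * θ s))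
        * (p2 ![1, 1] + p2 ![Complex.I, Complex.I]) := by
    have step : ∀ s : ZMod n, T s * (p2 fun _ => us s - u)
        = (T s * (x s * x s)) * p2 ![1, 1]
          + (T s * (x s * y s)) * (p2 ![1, Complex.I] + p2 ![Complex.I, 1])
          + (T s * (y s * y s)) * p2 ![Complex.I, Complex.I] := by
      intro s
      rw [hvec s, bilin_expand]
      ring
    rw [Finset.sum_congr rfl (fun s _ => step s), Finset.sum_add_distrib,
      Finset.sum_add_distrib, ← Finset.sum_mul, ← Finset.sum_mul, ← Finset.sum_mul,
      C2, K1, K2]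
    ring
  -- assemble
  have Split : ∑ s : ZMod n, T s * (φ (us s) - φ u)
      = (δ ^ 2 / 2 * ∑ s : ZMod n, Real.sin (2 * θ s))
          * (p2 ![1, 1] + p2 ![Complex.I, Complex.I])
        + ∑ s : ZMod n, T s * R s := by
    have step : ∀ s : ZMod n, T s * (φ (us s) - φ u)
        = T s * (p1 fun _ => us s - u) + (T s * (p2 fun _ => us s - u)) / 2
          + T s * R s := by
      intro s
      simp only [hRdef]
      ring
    rw [Finset.sum_congr rfl (fun s _ => step s), Finset.sum_add_distrib,
      Finset.sum_add_distrib, Lsum,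
      show ∑ s : ZMod n, (T s * (p2 fun _ => us s - u)) / 2
        = (∑ s : ZMod n, T s * (p2 fun _ => us s - u)) / 2 from
          (Finset.sum_div _ _ _).symm, Qsum]
    ring
  have key : (δ ^ 2 / 2 * ∑ s : ZMod n, Real.sin (2 * θ s))⁻¹
        * (∑ s : ZMod n, T s * (φ (us s) - φ u))
      - (p2 ![1, 1] + p2 ![Complex.I, Complex.I])
      = (δ ^ 2 / 2 * ∑ s : ZMod n, Real.sin (2 * θ s))⁻¹
        * ∑ s : ZMod n, T s * R s := by
    rw [Split, mul_add, inv_mul_cancel_left₀ (ne_of_gt hμpos)]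
    ring
  rw [key, abs_mul, abs_of_pos (inv_pos.2 hμpos)]
  have hsumR : |∑ s : ZMod n, T s * R s|
      ≤ (n : ℝ) * (Real.tan (Real.pi / 2 - η) * (M * (2 * δ) ^ 3 / 2)) := by
    calc |∑ s : ZMod n, T s * R s| ≤ ∑ s : ZMod n, |T s * R s| :=
          Finset.abs_sum_le_sum_abs _ _
      _ ≤ ∑ _s : ZMod n, Real.tan (Real.pi / 2 - η) * (M * (2 * δ) ^ 3 / 2) := by
          apply Finset.sum_le_sum
          intro s _
          rw [abs_mul, abs_of_pos (htan0 s)]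
          apply mul_le_mul (htanle s) (hRle s) (abs_nonneg _) htanpos.le
      _ = (n : ℝ) * (Real.tan (Real.pi / 2 - η) * (M * (2 * δ) ^ 3 / 2)) := by
          rw [Finset.sum_const, Finset.card_univ, ZMod.card, nsmul_eq_mul]
  calc (δ ^ 2 / 2 * ∑ s : ZMod n, Real.sin (2 * θ s))⁻¹ * |∑ s : ZMod n, T s * R s|
      ≤ (δ ^ 2 / 2 * ∑ s : ZMod n, Real.sin (2 * θ s))⁻¹
        * ((n : ℝ) * (Real.tan (Real.pi / 2 - η) * (M * (2 * δ) ^ 3 / 2))) := by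
        apply mul_le_mul_of_nonneg_left hsumR (inv_pos.2 hμpos).le
    _ ≤ 8 * Real.tan (Real.pi / 2 - η) / Real.sin (2 * η) * δ * M := by
        rw [inv_mul_le_iff₀ hμpos]
        have heq : 8 * Real.tan (Real.pi / 2 - η) / Real.sin (2 * η) * δ * M
            * (δ ^ 2 / 2 * ((n : ℝ) * Real.sin (2 * η)))
            = (n : ℝ) * (Real.tan (Real.pi / 2 - η) * (M * (2 * δ) ^ 3 / 2)) := by
          field_simp
          ring
        calc (n : ℝ) * (Real.tan (Real.pi / 2 - η) * (M * (2 * δ) ^ 3 / 2))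
            = 8 * Real.tan (Real.pi / 2 - η) / Real.sin (2 * η) * δ * M
              * (δ ^ 2 / 2 * ((n : ℝ) * Real.sin (2 * η))) := heq.symm
          _ ≤ (δ ^ 2 / 2 * ∑ s : ZMod n, Real.sin (2 * θ s))
              * (8 * Real.tan (Real.pi / 2 - η) / Real.sin (2 * η) * δ * M) := by
              rw [mul_comm]
              apply mul_le_mul_of_nonneg_right _ (by positivity)
              apply mul_le_mul_of_nonneg_left hsinsum (by positivity)
end

section
/- If H is discrete holomorphic on Λ = Γ ∪ Γ*, then the averaged function [m^δ H](z) = ¼(H(v_1) + H(v_2) + H(v_3) + H(v_4)), where v_1,...,v_4 are the four vertices of the rhombus centered at z, is discrete holomorphic on ◊, i.e., [∂̄^δ (m^δ H)](v) = 0 for every v ∈ Λ where it is defined. -/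
open Complex

/-- If `H` is discrete holomorphic on `Λ = Γ ∪ Γ*`, then the averaged
function `[m^δ H](z) = ¼(H(v₁) + H(v₂) + H(v₃) + H(v₄))` over the four vertices of
the rhombus centered at `z` is discrete holomorphic on `◊`: at a vertex `u` with
neighbors `us s`, dual cycle `ws s` and rhombi centers `z_s = (u + us s)/2`,
`[∂̄^δ (m^δ H)](u) = (4μ_Λ(u))⁻¹ ∑ i(w_{s+1} − w_s)·[m^δ H](z_s) = 0`. -/
theorem averaging_preserves_holomorphicity (n : ℕ) [NeZero n] (δ : ℝ) (hδ : 0 < δ)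
    (θ : ZMod n → ℝ) (hθ : ∀ s, θ s ∈ Set.Ioo 0 (Real.pi / 2))
    (u : ℂ) (us ws : ZMod n → ℂ)
    (hlin : ∀ s, (Real.tan (θ s) : ℂ) * (us s - u) = -I * (ws (s + 1) - ws s))
    (hlen : ∀ s, ‖us s - u‖ = 2 * δ * Real.cos (θ s))
    (hmid : ∀ s, (u + us s) / 2 = (ws s + ws (s + 1)) / 2)
    (H : ℂ → ℂ)
    (hhol : ∀ s, (H (us s) - H u) / ((starRingEnd ℂ) (us s) - (starRingEnd ℂ) u)
        + (H (ws (s + 1)) - H (ws s))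
            / ((starRingEnd ℂ) (ws (s + 1)) - (starRingEnd ℂ) (ws s)) = 0) :
    ∑ s : ZMod n, I * (ws (s + 1) - ws s)
        * ((H u + H (us s) + H (ws s) + H (ws (s + 1))) / 4) = 0 := by
  -- telescoping helper
  have tele : ∀ f : ZMod n → ℂ, ∑ s : ZMod n, (f (s + 1) - f s) = 0 := by
    intro f
    rw [Finset.sum_sub_distrib, sub_eq_zero]
    exact Fintype.sum_equiv (Equiv.addRight (1 : ZMod n)) _ _ (fun s => rfl)
  set g : ZMod n → ℂ := fun s => I * ws s * H u / 2 + I * (H (ws s) * (ws s - u)) / 2 with hg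
  have key : ∀ s : ZMod n,
      I * (ws (s + 1) - ws s) * ((H u + H (us s) + H (ws s) + H (ws (s + 1))) / 4)
        = g (s + 1) - g s := by
    intro s
    have hθs := hθ s
    have htanpos : 0 < Real.tan (θ s) := Real.tan_pos_of_pos_of_lt_pi_div_two hθs.1 hθs.2
    have ht : (Real.tan (θ s) : ℂ) ≠ 0 := by
      exact_mod_cast ne_of_gt htanpos
    have hcos : 0 < Real.cos (θ s) := Real.cos_pos_of_mem_Ioo
      ⟨by linarith [hθs.1, Real.pi_pos], hθs.2⟩
    have hu : us s - u ≠ 0 := by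
      intro h
      have := hlen s
      rw [h, norm_zero] at this
      nlinarith
    have ha : ws (s + 1) - ws s ≠ 0 := by
      intro h
      have := hlin s
      rw [h, mul_zero] at this
      exact hu (by
        have := mul_eq_zero.mp this
        tauto)
    have hcu : (starRingEnd ℂ) (us s) - (starRingEnd ℂ) u ≠ 0 := by
      rw [← map_sub, starRingEnd_apply, star_ne_zero]
      exact hu
    have hca : (starRingEnd ℂ) (ws (s + 1)) - (starRingEnd ℂ) (ws s) ≠ 0 := by
      rw [← map_sub, starRingEnd_apply, star_ne_zero]
      exact ha
    -- conjugate of hlin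
    have hlinc : (Real.tan (θ s) : ℂ) * ((starRingEnd ℂ) (us s) - (starRingEnd ℂ) u)
        = I * ((starRingEnd ℂ) (ws (s + 1)) - (starRingEnd ℂ) (ws s)) := by
      have := congrArg (starRingEnd ℂ) (hlin s)
      simp only [map_mul, map_sub, map_neg, Complex.conj_ofReal, Complex.conj_I] at this
      linear_combination this
    -- clear denominators in hhol
    have h1 : (H (us s) - H u) * ((starRingEnd ℂ) (ws (s + 1)) - (starRingEnd ℂ) (ws s))
        + (H (ws (s + 1)) - H (ws s)) * ((starRingEnd ℂ) (us s) - (starRingEnd ℂ) u) = 0 := by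
      have := hhol s
      field_simp at this
      linear_combination this
    -- derive t*(Hus - Hu) = -I*(Hw' - Hw)
    have h2 : (Real.tan (θ s) : ℂ) * (H (us s) - H u)
        = -I * (H (ws (s + 1)) - H (ws s)) := by
      have h3 : ((Real.tan (θ s) : ℂ) * (H (us s) - H u)
          + I * (H (ws (s + 1)) - H (ws s)))
          * ((starRingEnd ℂ) (ws (s + 1)) - (starRingEnd ℂ) (ws s)) = 0 := by
        linear_combination (Real.tan (θ s) : ℂ) * h1
          - (H (ws (s + 1)) - H (ws s)) * hlinc
      rcases mul_eq_zero.mp h3 with h | h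
      · linear_combination h
      · exact absurd h hca
    -- key algebraic relation: a*(Hus - Hu) = (us - u)*(Hw' - Hw)
    have h4 : (ws (s + 1) - ws s) * (H (us s) - H u)
        = (us s - u) * (H (ws (s + 1)) - H (ws s)) := by
      have h5 : (Real.tan (θ s) : ℂ) * ((ws (s + 1) - ws s) * (H (us s) - H u)
          - (us s - u) * (H (ws (s + 1)) - H (ws s))) = 0 := by
        linear_combination (ws (s + 1) - ws s) * h2 - (H (ws (s + 1)) - H (ws s)) * hlin s
      rcases mul_eq_zero.mp h5 with h | h
      · exact absurd h ht
      · linear_combination h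
    have h6 : us s - u = ws s + ws (s + 1) - 2 * u := by
      linear_combination 2 * hmid s
    rw [h6] at h4
    simp only [hg]
    linear_combination (I / 4) * h4
  calc ∑ s : ZMod n, I * (ws (s + 1) - ws s)
        * ((H u + H (us s) + H (ws s) + H (ws (s + 1))) / 4)
      = ∑ s : ZMod n, (g (s + 1) - g s) := Finset.sum_congr rfl (fun s _ => key s)
    _ = 0 := tele g
end
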